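/- Let C ⊆ [0,1] with λ(C) > 0, Q the standard Gaussian measure on ℝ, S_y as in the previous item (Gaussian conditioned to avoid C + y), R the measure on ℝ² determined by R(A×B) = ∫_B S_y(A) dQ(y), and P(A) := R(A×ℝ). Let H := {(x,y) : x − y ∈ C}. Then R(H) = 0 but (P⊗Q)(H) > 0; consequently P⊗Q is not absolutely continuous with respect to R. -/
import Mathlib


open MeasureTheory Set

open scoped ENNReal ProbabilityTheory

theorem stmt13 (C : Set ℝ) (hC : MeasurableSet C) (hC1 : C ⊆ Set.Icc 0 1)
    (hCpos : 0 < volume C)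
    (S : ℝ → Measure ℝ)
    (hS : ∀ y, S y = (∫⁻ t in Cᶜ, ENNReal.ofReal (Real.exp (-t ^ 2 / 2)))⁻¹ •
      ((volume.restrict {t : ℝ | t - y ∉ C}).withDensity
        fun t => ENNReal.ofReal (Real.exp (-(t - y) ^ 2 / 2))))
    (R : Measure (ℝ × ℝ)) [IsProbabilityMeasure R]
    (hR : ∀ (A B : Set ℝ), MeasurableSet A → MeasurableSet B →
      R (A ×ˢ B) = ∫⁻ y in B, S y A ∂(ProbabilityTheory.gaussianReal 0 1))
    (P : Measure ℝ) (hP : P = R.map Prod.fst) :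
    R {p : ℝ × ℝ | p.1 - p.2 ∈ C} = 0 ∧
    0 < (P.prod (ProbabilityTheory.gaussianReal 0 1)) {p : ℝ × ℝ | p.1 - p.2 ∈ C} ∧
    ¬ (P.prod (ProbabilityTheory.gaussianReal 0 1)) ≪ R := by
  set Q : Measure ℝ := ProbabilityTheory.gaussianReal 0 1 with hQdef
  set c : ℝ≥0∞ := ∫⁻ t in Cᶜ, ENNReal.ofReal (Real.exp (-t ^ 2 / 2)) with hcdef
  set g : ℝ → ℝ≥0∞ := fun t => ENNReal.ofReal (Real.exp (-t ^ 2 / 2)) with hgdef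
  have hgmeas : Measurable g :=
    (Real.measurable_exp.comp (((measurable_id.pow_const 2).neg).div_const 2)).ennreal_ofReal
  have hH : MeasurableSet {p : ℝ × ℝ | p.1 - p.2 ∈ C} :=
    hC.preimage (measurable_fst.sub measurable_snd)
  -- c is finite
  have hctop : c ≠ ∞ := by
    have hint : Integrable (fun t : ℝ => Real.exp (-(1/2) * t ^ 2)) volume :=
      integrable_exp_neg_mul_sq (by norm_num)
    have hint' : Integrable (fun t : ℝ => Real.exp (-t ^ 2 / 2)) volume := by
      convert hint using 2 with t; ring_nf
    have hfin : ∫⁻ t, g t ∂volume < ∞ := by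
      have := hint'.hasFiniteIntegral
      rwa [hasFiniteIntegral_iff_ofReal (ae_of_all _ fun t => (Real.exp_pos _).le)] at this
    exact ne_top_of_le_ne_top hfin.ne (setLIntegral_le_lintegral _ _)
  -- c is positive
  have hc0 : c ≠ 0 := by
    have hsub : Icc (2:ℝ) 3 ⊆ Cᶜ := by
      intro t ht htC
      have := (hC1 htC).2
      linarith [ht.1]
    have h1 : (∫⁻ t in Icc (2:ℝ) 3, ENNReal.ofReal (Real.exp (-(9:ℝ)/2)) ∂volume) ≤
        ∫⁻ t in Icc (2:ℝ) 3, g t ∂volume := by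
      refine setLIntegral_mono hgmeas fun t ht => ?_
      refine ENNReal.ofReal_le_ofReal (Real.exp_le_exp.mpr ?_)
      have h2 : (0:ℝ) ≤ t := by linarith [ht.1]
      nlinarith [ht.1, ht.2]
    have h2 : (∫⁻ t in Icc (2:ℝ) 3, g t ∂volume) ≤ c := by
      rw [hcdef]; exact lintegral_mono_set hsub
    have h3 : (0:ℝ≥0∞) < ∫⁻ t in Icc (2:ℝ) 3, ENNReal.ofReal (Real.exp (-(9:ℝ)/2)) ∂volume := by
      rw [setLIntegral_const]
      refine ENNReal.mul_pos ?_ ?_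
      · simpa using (ENNReal.ofReal_pos.mpr (Real.exp_pos _)).ne'
      · rw [Real.volume_Icc]; norm_num
    exact (lt_of_lt_of_le h3 (h1.trans h2)).ne'
  -- set of "allowed" points
  have hD : ∀ y : ℝ, MeasurableSet {t : ℝ | t - y ∉ C} := fun y =>
    (hC.compl).preimage (measurable_id.sub_const y)
  -- rewrite S y on measurable sets
  have hSapp : ∀ (y : ℝ) (s : Set ℝ), MeasurableSet s →
      S y s = c⁻¹ * ∫⁻ t in s ∩ {t : ℝ | t - y ∉ C},
        ENNReal.ofReal (Real.exp (-(t - y) ^ 2 / 2)) ∂volume := by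
    intro y s hs
    rw [hS y, Measure.smul_apply, smul_eq_mul, withDensity_apply _ hs,
      Measure.restrict_restrict hs]
  -- S y is a probability measure
  have hS1 : ∀ y : ℝ, S y univ = 1 := by
    intro y
    rw [hSapp y univ MeasurableSet.univ, univ_inter]
    have key : (∫⁻ t in {t : ℝ | t - y ∉ C},
        ENNReal.ofReal (Real.exp (-(t - y) ^ 2 / 2)) ∂volume) = c := by
      have h1 : (∫⁻ t in {t : ℝ | t - y ∉ C},
          ENNReal.ofReal (Real.exp (-(t - y) ^ 2 / 2)) ∂volume)
          = ∫⁻ t, (Cᶜ.indicator g) (t - y) ∂volume := by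
        rw [← lintegral_indicator (hD y)]
        refine lintegral_congr fun t => ?_
        by_cases h : t - y ∈ C <;>
          simp [Set.indicator, h, hgdef]
      rw [h1, (measurePreserving_sub_right volume y).lintegral_comp (hgmeas.indicator hC.compl),
        lintegral_indicator hC.compl]
    rw [key, ENNReal.inv_mul_cancel hc0 hctop]
  -- measurability of the kernel
  have hκmeas : Measurable S := by
    refine Measure.measurable_of_measurable_coe _ fun s hs => ?_
    have hE : MeasurableSet {p : ℝ × ℝ | p.2 ∈ s ∧ p.2 - p.1 ∉ C} :=
      (hs.preimage measurable_snd).inter ((hC.compl).preimage (measurable_snd.sub measurable_fst))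
    have hG : Measurable fun p : ℝ × ℝ =>
        ({p : ℝ × ℝ | p.2 ∈ s ∧ p.2 - p.1 ∉ C}).indicator
          (fun p => ENNReal.ofReal (Real.exp (-(p.2 - p.1) ^ 2 / 2))) p := by
      exact Measurable.indicator
        ((Real.measurable_exp.comp
          ((((measurable_snd.sub measurable_fst).pow_const 2).neg).div_const 2)).ennreal_ofReal) hE
    have heq : (fun y => S y s) = fun y => c⁻¹ * ∫⁻ t,
        ({p : ℝ × ℝ | p.2 ∈ s ∧ p.2 - p.1 ∉ C}).indicator
          (fun p => ENNReal.ofReal (Real.exp (-(p.2 - p.1) ^ 2 / 2))) (y, t) ∂volume := by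
      funext y
      rw [hSapp y s hs, ← lintegral_indicator (hs.inter (hD y))]
      exact congrArg (c⁻¹ * ·) (lintegral_congr fun t => by
        by_cases h1 : t ∈ s <;> by_cases h2 : t - y ∈ C <;>
          simp [Set.indicator, h1, h2])
    rw [heq]
    refine Measurable.const_mul ?_ _
    exact Measurable.lintegral_prod_right
      (f := fun y t => ({p : ℝ × ℝ | p.2 ∈ s ∧ p.2 - p.1 ∉ C}).indicator
        (fun p => ENNReal.ofReal (Real.exp (-(p.2 - p.1) ^ 2 / 2))) (y, t)) hG
  set κ : ProbabilityTheory.Kernel ℝ ℝ := ⟨S, hκmeas⟩ with hκdef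
  have hκapp : ∀ y, κ y = S y := fun y => rfl
  have : ProbabilityTheory.IsMarkovKernel κ := ⟨fun y => ⟨by rw [hκapp y]; exact hS1 y⟩⟩
  -- R is the swap of the composition
  have hRν : R = (Q.compProd κ).map Prod.swap := by
    have hmapprob : IsProbabilityMeasure ((Q.compProd κ).map Prod.swap) :=
      Measure.isProbabilityMeasure_map measurable_swap.aemeasurable
    refine ext_of_generate_finite _ generateFrom_prod.symm isPiSystem_prod ?_ ?_
    · rintro _ ⟨A, hA, B, hB, rfl⟩
      have hA' : MeasurableSet A := hA
      have hB' : MeasurableSet B := hB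
      rw [hR A B hA' hB', Measure.map_apply measurable_swap (hA'.prod hB'),
        Set.preimage_swap_prod, Measure.compProd_apply_prod hB' hA']
      rfl
    · rw [measure_univ, measure_univ]
  -- first claim : R H = 0
  have hRH : R {p : ℝ × ℝ | p.1 - p.2 ∈ C} = 0 := by
    rw [hRν, Measure.map_apply measurable_swap hH]
    have hpre : Prod.swap ⁻¹' {p : ℝ × ℝ | p.1 - p.2 ∈ C} = {p : ℝ × ℝ | p.2 - p.1 ∈ C} := rfl
    have hH' : MeasurableSet {p : ℝ × ℝ | p.2 - p.1 ∈ C} :=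
      hC.preimage (measurable_snd.sub measurable_fst)
    rw [hpre, Measure.compProd_apply hH']
    have hzero : ∀ y : ℝ, κ y (Prod.mk y ⁻¹' {p : ℝ × ℝ | p.2 - p.1 ∈ C}) = 0 := by
      intro y
      have hset : (Prod.mk y ⁻¹' {p : ℝ × ℝ | p.2 - p.1 ∈ C}) = {x : ℝ | x - y ∈ C} := rfl
      have hs' : MeasurableSet {x : ℝ | x - y ∈ C} := hC.preimage (measurable_id.sub_const y)
      rw [hκapp, hset, hSapp y {x : ℝ | x - y ∈ C} hs']
      have hempty : {x : ℝ | x - y ∈ C} ∩ {t : ℝ | t - y ∉ C} = ∅ := by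
        ext x; simp
      rw [hempty]
      simp
    have hmain : (∫⁻ y, (κ y) (Prod.mk y ⁻¹' {p : ℝ × ℝ | p.2 - p.1 ∈ C}) ∂Q)
        = ∫⁻ _, (0:ℝ≥0∞) ∂Q := lintegral_congr hzero
    rw [hmain, lintegral_zero]
  refine ⟨hRH, ?_, ?_⟩
  · -- second claim : (P ⊗ Q) H > 0
    have hPuniv : P univ = 1 := by
      rw [hP, Measure.map_apply measurable_fst MeasurableSet.univ, preimage_univ, measure_univ]
    have : IsProbabilityMeasure P := ⟨hPuniv⟩
    rw [Measure.prod_apply hH]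
    rw [lintegral_pos_iff_support (measurable_measure_prodMk_left hH)]
    have hQpos : ∀ x : ℝ, 0 < Q (Prod.mk x ⁻¹' {p : ℝ × ℝ | p.1 - p.2 ∈ C}) := by
      intro x
      have hset : (Prod.mk x ⁻¹' {p : ℝ × ℝ | p.1 - p.2 ∈ C}) = (fun y => x - y) ⁻¹' C := rfl
      rw [hset, pos_iff_ne_zero]
      intro h0
      have hvol : volume ((fun y => x - y) ⁻¹' C) = volume C :=
        (Measure.measurePreserving_sub_left volume x).measure_preimage hC.nullMeasurableSet
      have habs : volume ((fun y => x - y) ⁻¹' C) = 0 :=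
        ProbabilityTheory.gaussianReal_absolutelyContinuous' 0 (by norm_num) h0
      rw [hvol] at habs
      exact hCpos.ne' habs
    have hsupp : Function.support (fun x => Q (Prod.mk x ⁻¹' {p : ℝ × ℝ | p.1 - p.2 ∈ C}))
        = univ := eq_univ_of_forall fun x => (hQpos x).ne'
    rw [hsupp, hPuniv]
    norm_num
  · -- third claim
    intro habs
    have h0 := habs hRH
    have hPuniv : P univ = 1 := by
      rw [hP, Measure.map_apply measurable_fst MeasurableSet.univ, preimage_univ, measure_univ]
    have : IsProbabilityMeasure P := ⟨hPuniv⟩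
    have hpos : 0 < (P.prod Q) {p : ℝ × ℝ | p.1 - p.2 ∈ C} := by
      rw [Measure.prod_apply hH]
      rw [lintegral_pos_iff_support (measurable_measure_prodMk_left hH)]
      have hQpos : ∀ x : ℝ, 0 < Q (Prod.mk x ⁻¹' {p : ℝ × ℝ | p.1 - p.2 ∈ C}) := by
        intro x
        have hset : (Prod.mk x ⁻¹' {p : ℝ × ℝ | p.1 - p.2 ∈ C}) = (fun y => x - y) ⁻¹' C := rfl
        rw [hset, pos_iff_ne_zero]
        intro h0'
        have hvol : volume ((fun y => x - y) ⁻¹' C) = volume C :=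
          (Measure.measurePreserving_sub_left volume x).measure_preimage hC.nullMeasurableSet
        have habs' : volume ((fun y => x - y) ⁻¹' C) = 0 :=
          ProbabilityTheory.gaussianReal_absolutelyContinuous' 0 (by norm_num) h0'
        rw [hvol] at habs'
        exact hCpos.ne' habs'
      have hsupp : Function.support (fun x => Q (Prod.mk x ⁻¹' {p : ℝ × ℝ | p.1 - p.2 ∈ C}))
          = univ := eq_univ_of_forall fun x => (hQpos x).ne'
      rw [hsupp, hPuniv]
      norm_num
    exact hpos.ne' h0
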